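/- arXiv:1802.05906 — 6 statements merged into one kernel-verified Lean document; each statement's English description precedes it below -/
import Mathlib

section
/- Let 1 ≤ k < n. Define B = {(SA[q], SA[q+1]) : 1 ≤ q < n and BWT[q] ≠ BWT[q+1]} (the pairs of text positions associated with the last position of each run of the BWT and the following position). Suppose (x, y) ∈ B satisfies x ≤ SA[k], and x is maximal with this property, i.e., every (x', y') ∈ B with x' ≤ SA[k] has x' ≤ x. Then SA[k+1] = y + SA[k] − x. -/
variable {α : Type*} [LinearOrder α]

/-- The suffix `T[p..n]` of a 1-indexed string `T[1..n]`, as a list. -/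
def sfx (T : ℕ → α) (n p : ℕ) : List α :=
  (List.range (n + 1 - p)).map (fun d => T (p + d))

/-- The Burrows–Wheeler transform determined by the text `T`, its suffix array `SA`,
and the end-of-string character `dollar`:  `BWT[i] = T[SA[i]-1]` if `SA[i] > 1`,
and `BWT[i] = $` if `SA[i] = 1`. -/
def bwt (T : ℕ → α) (SA : ℕ → ℕ) (dollar : α) (i : ℕ) : α :=
  if SA i = 1 then dollar else T (SA i - 1)

lemma sfx_cons' (T : ℕ → α) (n p : ℕ) (h : p ≤ n) : sfx T n p = T p :: sfx T n (p+1) := by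
  unfold sfx
  have : n + 1 - p = (n + 1 - (p+1)) + 1 := by omega
  rw [this, List.range_succ_eq_map, List.map_cons, List.map_map]
  simp only [Nat.add_zero]
  congr 1
  apply List.map_congr_left
  intro d _
  simp only [Function.comp_apply]
  congr 1
  omega

lemma lex_sandwich' (c : α) (a b L : List α) (h1 : (c :: a) < L) (h2 : L < (c :: b)) :
    ∃ L', L = c :: L' ∧ a < L' ∧ L' < b := by
  cases h1 with
  | cons h => cases h2 with
    | cons h' => exact ⟨_, rfl, h, h'⟩
    | rel h' => exact absurd h' (lt_irrefl c)
  | rel h => cases h2 with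
    | cons h' => exact absurd h (lt_irrefl c)
    | rel h' => exact absurd (h.trans h') (lt_irrefl c)

/-- If `(x, y)` is the pair of `B` (pairs of SA entries across run
boundaries of the BWT) with `x ≤ SA[k]` and `x` maximal with this property, then
`SA[k+1] = y + SA[k] - x`. -/
theorem statement0
    (n : ℕ) (T : ℕ → α) (dollar : α) (SA : ℕ → ℕ)
    -- `T[1..n]` is a string of length `n ≥ 1` ending with `$`,
    -- which is smaller than every other character and occurs only at position `n`
    (hn : 1 ≤ n) (hTn : T n = dollar)
    (hdollar : ∀ p, 1 ≤ p → p < n → dollar < T p)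
    -- `SA` is a permutation of `{1,...,n}` sorting the suffixes lexicographically
    (hSAran : ∀ i, 1 ≤ i → i ≤ n → 1 ≤ SA i ∧ SA i ≤ n)
    (hSAsurj : ∀ p, 1 ≤ p → p ≤ n → ∃ i, 1 ≤ i ∧ i ≤ n ∧ SA i = p)
    (hSAmono : ∀ i j, 1 ≤ i → i < j → j ≤ n → sfx T n (SA i) < sfx T n (SA j))
    (k : ℕ) (hk1 : 1 ≤ k) (hk2 : k < n)
    (x y : ℕ)
    -- `(x, y) ∈ B`: there is a run boundary `q, q+1` with `x = SA[q]`, `y = SA[q+1]`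
    (hxyB : ∃ q, 1 ≤ q ∧ q < n ∧ bwt T SA dollar q ≠ bwt T SA dollar (q + 1) ∧
      x = SA q ∧ y = SA (q + 1))
    -- `x ≤ SA[k]`
    (hxle : x ≤ SA k)
    -- and `x` is maximal with this property among the first components of `B`
    (hxmax : ∀ q, 1 ≤ q → q < n → bwt T SA dollar q ≠ bwt T SA dollar (q + 1) →
      SA q ≤ SA k → SA q ≤ x) :
    SA (k + 1) = y + SA k - x := by
  obtain ⟨q0, hq01, hq0n, hq0ne, hxq, hyq⟩ := hxyB
  -- order-reflecting
  have reflect : ∀ i j, 1 ≤ i → i ≤ n → 1 ≤ j → j ≤ n →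
      sfx T n (SA i) < sfx T n (SA j) → i < j := by
    intro i j hi hin hj hjn h
    rcases lt_trichotomy i j with h' | h' | h'
    · exact h'
    · subst h'; exact absurd h (lt_irrefl _)
    · exact absurd (h.trans (hSAmono j i hj h' hin)) (lt_irrefl _)
  have inj : ∀ i j, 1 ≤ i → i ≤ n → 1 ≤ j → j ≤ n → SA i = SA j → i = j := by
    intro i j hi hin hj hjn h
    rcases lt_trichotomy i j with h' | h' | h'
    · have := hSAmono i j hi h' hjn; rw [h] at this; exact absurd this (lt_irrefl _)
    · exact h'
    · have := hSAmono j i hj h' hin; rw [h] at this; exact absurd this (lt_irrefl _)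
  have main : ∀ N k, 1 ≤ k → k < n → x ≤ SA k → SA k ≤ N →
      (∀ q, 1 ≤ q → q < n → bwt T SA dollar q ≠ bwt T SA dollar (q + 1) →
        SA q ≤ SA k → SA q ≤ x) →
      SA (k + 1) = y + SA k - x := by
    intro N
    induction N with
    | zero =>
      intro k hk1 hk2 _ hkN _
      have := (hSAran k hk1 (le_of_lt hk2)).1
      omega
    | succ N ih =>
      intro k hk1 hk2 hxk hkN hmax
      by_cases hcase : SA k = x
      · -- base case: the boundary is exactly at k
        have hq0k : q0 = k :=
          inj q0 k hq01 (le_of_lt hq0n) hk1 (le_of_lt hk2) (by omega)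
        subst hq0k
        omega
      · have hxlt : x < SA k := lt_of_le_of_ne hxk (fun h => hcase h.symm)
        have hbk : bwt T SA dollar k = bwt T SA dollar (k + 1) := by
          by_contra hne
          have := hmax k hk1 hk2 hne le_rfl
          omega
        have hSAk := hSAran k hk1 (le_of_lt hk2)
        have hSAk1 := hSAran (k+1) (by omega) (by omega)
        have hk_ne_k1 : SA k ≠ SA (k+1) := fun h => by
          have := inj k (k+1) hk1 (le_of_lt hk2) (by omega) (by omega) h; omega
        have hSAk_ne1 : SA k ≠ 1 := by
          intro h1
          have h2 : SA (k+1) ≠ 1 := fun h' => hk_ne_k1 (by omega)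
          have hb1 : bwt T SA dollar k = dollar := by simp [bwt, h1]
          have hb2 : bwt T SA dollar (k+1) = T (SA (k+1) - 1) := by simp [bwt, h2]
          have hb : dollar = T (SA (k+1) - 1) := by rw [← hb1, hbk, hb2]
          exact absurd hb (ne_of_lt (hdollar _ (by omega) (by omega)))
        have hSAk1_ne1 : SA (k+1) ≠ 1 := by
          intro h1
          have hb1 : bwt T SA dollar (k+1) = dollar := by simp [bwt, h1]
          have hb2 : bwt T SA dollar k = T (SA k - 1) := by simp [bwt, hSAk_ne1]
          have hb : dollar = T (SA k - 1) := by rw [← hb1, ← hbk, hb2]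
          exact absurd hb (ne_of_lt (hdollar _ (by omega) (by omega)))
        have hc2 : T (SA (k+1) - 1) = T (SA k - 1) := by
          have hb2 : bwt T SA dollar k = T (SA k - 1) := by simp [bwt, hSAk_ne1]
          have hb3 : bwt T SA dollar (k+1) = T (SA (k+1) - 1) := by simp [bwt, hSAk1_ne1]
          rw [← hb2, ← hb3, hbk]
        have e1 : SA k - 1 + 1 = SA k := by omega
        have e2 : SA (k+1) - 1 + 1 = SA (k+1) := by omega
        have hs1 : sfx T n (SA k - 1) = T (SA k - 1) :: sfx T n (SA k) := by
          rw [sfx_cons' T n (SA k - 1) (by omega), e1]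
        have hs2 : sfx T n (SA (k+1) - 1) = T (SA k - 1) :: sfx T n (SA (k+1)) := by
          rw [sfx_cons' T n (SA (k+1) - 1) (by omega), e2, hc2]
        obtain ⟨i, hi1, hin, hSAi⟩ := hSAsurj (SA k - 1) (by omega) (by omega)
        obtain ⟨j, hj1, hjn, hSAj⟩ := hSAsurj (SA (k+1) - 1) (by omega) (by omega)
        have hmono_kk1 := hSAmono k (k+1) hk1 (lt_add_one k) (by omega)
        have hij : i < j := by
          apply reflect i j hi1 hin hj1 hjn
          rw [hSAi, hSAj, hs1, hs2]
          exact List.Lex.cons hmono_kk1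
        have hji : j = i + 1 := by
          by_contra hne2
          have hmlt : i + 1 < j := by omega
          have h1 : sfx T n (SA i) < sfx T n (SA (i+1)) :=
            hSAmono i (i+1) hi1 (lt_add_one i) (by omega)
          have h2 : sfx T n (SA (i+1)) < sfx T n (SA j) :=
            hSAmono (i+1) j (by omega) hmlt hjn
          rw [hSAi, hs1] at h1
          rw [hSAj, hs2] at h2
          obtain ⟨L', hL', hA, hB⟩ := lex_sandwich' _ _ _ _ h1 h2
          have hm_le : SA (i+1) ≤ n := (hSAran (i+1) (by omega) (by omega)).2
          rw [sfx_cons' T n (SA (i+1)) hm_le] at hL'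
          have hL'eq : L' = sfx T n (SA (i+1) + 1) := (List.cons.inj hL').2.symm
          rw [hL'eq] at hA hB
          have hmn : SA (i+1) + 1 ≤ n := by
            by_contra hcon
            have hSAm_eq : SA (i+1) = n := by omega
            have hnil : sfx T n (SA (i+1) + 1) = [] := by
              rw [hSAm_eq]; simp [sfx]
            rw [hnil] at hA
            exact List.not_lt_nil _ hA
          obtain ⟨m', hm'1, hm'n, hSAm'⟩ := hSAsurj (SA (i+1) + 1) (by omega) hmn
          have hk_lt : k < m' := by
            apply reflect k m' hk1 (le_of_lt hk2) hm'1 hm'n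
            rw [hSAm']; exact hA
          have hlt_k1 : m' < k + 1 := by
            apply reflect m' (k+1) hm'1 hm'n (by omega) (by omega)
            rw [hSAm']; exact hB
          omega
        have hin' : i < n := by omega
        have hxi : x ≤ SA i := by rw [hSAi]; omega
        have hiN : SA i ≤ N := by rw [hSAi]; omega
        have hmax' : ∀ q, 1 ≤ q → q < n → bwt T SA dollar q ≠ bwt T SA dollar (q + 1) →
            SA q ≤ SA i → SA q ≤ x := by
          intro q a b c hle
          apply hmax q a b c
          rw [hSAi] at hle; omega
        have hIH := ih i hi1 hin' hxi hiN hmax'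
        rw [hji] at hSAj
        omega
  exact main (SA k) k hk1 hk2 hxle le_rfl hxmax
end

section
/- Let 1 ≤ h < j ≤ n. Then there exists a threshold i with h ≤ i < j such that: for every i' with h < i' ≤ i, lcp(T[SA[i']..n], T[SA[h]..n]) ≥ lcp(T[SA[i']..n], T[SA[j]..n]); and for every i' with i < i' < j, lcp(T[SA[i']..n], T[SA[j]..n]) ≥ lcp(T[SA[i']..n], T[SA[h]..n]). -/
variable {α : Type*} [LinearOrder α]

/-- Length of the longest common prefix of two lists. -/
def lcp [DecidableEq β] : List β → List β → ℕ
  | a :: u, b :: v => if a = b then lcp u v + 1 else 0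
  | _, _ => 0

lemma lcp_nil_left [DecidableEq β] (v : List β) : lcp ([] : List β) v = 0 := by
  cases v <;> rfl

lemma lcp_nil_right [DecidableEq β] (u : List β) : lcp u ([] : List β) = 0 := by
  cases u <;> rfl

lemma lcp_comm [DecidableEq β] : ∀ u v : List β, lcp u v = lcp v u
  | [], v => by rw [lcp_nil_left, lcp_nil_right]
  | u, [] => by rw [lcp_nil_left, lcp_nil_right]
  | a :: u, b :: v => by
    simp only [lcp]
    rcases eq_or_ne a b with rfl | hab
    · simp [lcp_comm u v]
    · simp [hab, Ne.symm hab]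

lemma cons_le_cons_elim {β : Type*} [LinearOrder β] {a b : β} {u v : List β}
    (h : a :: u ≤ b :: v) : a < b ∨ (a = b ∧ u ≤ v) := by
  rcases eq_or_lt_of_le h with heq | hlt
  · obtain ⟨rfl, rfl⟩ : a = b ∧ u = v := by
      have := List.cons.injEq a u b v ▸ congrArg id heq
      exact ⟨List.head_eq_of_cons_eq heq, List.tail_eq_of_cons_eq heq⟩
    exact Or.inr ⟨rfl, le_rfl⟩
  · cases hlt with
    | cons h' => exact Or.inr ⟨rfl, le_of_lt h'⟩
    | rel h' => exact Or.inl h'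

lemma lcp_sandwich {β : Type*} [LinearOrder β] :
    ∀ u v w : List β, u ≤ v → v ≤ w → lcp u w ≤ lcp u v ∧ lcp u w ≤ lcp v w
  | [], v, w, _, _ => by simp [lcp_nil_left]
  | u, v, [], _, _ => by simp [lcp_nil_right]
  | a :: u, [], c :: w, h1, _ => by
    exact absurd (lt_of_lt_of_le (List.nil_lt_cons a u) h1) (lt_irrefl _)
  | a :: u, b :: v, c :: w, h1, h2 => by
    rcases cons_le_cons_elim h1 with hab | ⟨rfl, huv⟩
    · -- a < b ≤ c, so a ≠ c
      have hbc : b ≤ c := by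
        rcases cons_le_cons_elim h2 with h' | ⟨h', _⟩
        · exact le_of_lt h'
        · exact le_of_eq h'
      have hac : a ≠ c := ne_of_lt (lt_of_lt_of_le hab hbc)
      have hab' : a ≠ b := ne_of_lt hab
      simp [lcp, hac, hab']
    · rcases cons_le_cons_elim h2 with hbc | ⟨rfl, hvw⟩
      · have hac : a ≠ c := ne_of_lt hbc
        simp [lcp, hac]
      · have IH := lcp_sandwich u v w huv hvw
        have e1 : lcp (a :: u) (a :: w) = lcp u w + 1 := by simp [lcp]
        have e2 : lcp (a :: u) (a :: v) = lcp u v + 1 := by simp [lcp]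
        have e3 : lcp (a :: v) (a :: w) = lcp v w + 1 := by simp [lcp]
        rw [e1, e2, e3]
        omega

/-- For `1 ≤ h < j ≤ n` there is a threshold `h ≤ i < j` such that
lexicographically, positions up to `i` have LCP with `T[SA[h]..n]` at least their LCP
with `T[SA[j]..n]`, and positions after `i` the other way around. -/
theorem statement6
    (n : ℕ) (T : ℕ → α) (dollar : α) (SA : ℕ → ℕ)
    -- `T[1..n]` is a string of length `n ≥ 1` ending with `$`,
    -- which is smaller than every other character and occurs only at position `n`
    (hn : 1 ≤ n) (hTn : T n = dollar)
    (hdollar : ∀ p, 1 ≤ p → p < n → dollar < T p)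
    -- `SA` is a permutation of `{1,...,n}` sorting the suffixes lexicographically
    (hSAran : ∀ i, 1 ≤ i → i ≤ n → 1 ≤ SA i ∧ SA i ≤ n)
    (hSAsurj : ∀ p, 1 ≤ p → p ≤ n → ∃ i, 1 ≤ i ∧ i ≤ n ∧ SA i = p)
    (hSAmono : ∀ i j, 1 ≤ i → i < j → j ≤ n → sfx T n (SA i) < sfx T n (SA j))
    (h j : ℕ) (hh : 1 ≤ h) (hhj : h < j) (hj : j ≤ n) :
    ∃ i, h ≤ i ∧ i < j ∧
      (∀ i', h < i' → i' ≤ i →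
        lcp (sfx T n (SA i')) (sfx T n (SA j)) ≤ lcp (sfx T n (SA i')) (sfx T n (SA h))) ∧
      (∀ i', i < i' → i' < j →
        lcp (sfx T n (SA i')) (sfx T n (SA h)) ≤ lcp (sfx T n (SA i')) (sfx T n (SA j))) := by
  classical
  -- suffix comparison in weak form
  have sle : ∀ i₁ i₂, 1 ≤ i₁ → i₁ ≤ i₂ → i₂ ≤ n →
      sfx T n (SA i₁) ≤ sfx T n (SA i₂) := by
    intro i₁ i₂ h1 h2 h3
    rcases eq_or_lt_of_le h2 with rfl | hlt
    · exact le_rfl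
    · exact le_of_lt (hSAmono _ _ h1 hlt h3)
  set f : ℕ → ℕ := fun i' => lcp (sfx T n (SA i')) (sfx T n (SA h)) with hf
  set g : ℕ → ℕ := fun i' => lcp (sfx T n (SA i')) (sfx T n (SA j)) with hg
  set P : ℕ → Prop := fun i' => h < i' ∧ g i' ≤ f i' with hP
  set i0 := Nat.findGreatest P (j - 1) with hi0
  refine ⟨max h i0, le_max_left _ _, ?_, ?_, ?_⟩
  · have : i0 ≤ j - 1 := Nat.findGreatest_le _
    omega
  · intro i' hi'1 hi'2
    have hi'i0 : i' ≤ i0 := by omega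
    have hi0pos : i0 ≠ 0 := by omega
    -- P holds at i0
    have hPi0 : P i0 := by
      rw [hi0]
      have : ¬ (Nat.findGreatest P (j - 1) = 0) := by rw [← hi0]; exact hi0pos
      rw [Nat.findGreatest_eq_zero_iff] at this
      push_neg at this
      obtain ⟨m, _, hm2, hm3⟩ := this
      exact Nat.findGreatest_spec hm2 hm3
    obtain ⟨hhi0, hgfi0⟩ := hPi0
    have hi0j : i0 < j := by have := Nat.findGreatest_le (P := P) (j - 1); omega
    -- g i' ≤ g i0
    have h1 : g i' ≤ g i0 := by
      have := (lcp_sandwich (sfx T n (SA i')) (sfx T n (SA i0)) (sfx T n (SA j))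
        (sle i' i0 (by omega) hi'i0 (by omega)) (sle i0 j (by omega) (le_of_lt hi0j) hj)).2
      simpa [hg] using this
    -- f i0 ≤ f i'
    have h2 : f i0 ≤ f i' := by
      have := (lcp_sandwich (sfx T n (SA h)) (sfx T n (SA i')) (sfx T n (SA i0))
        (sle h i' hh (by omega) (by omega)) (sle i' i0 (by omega) hi'i0 (by omega))).1
      simp only [hf]
      rw [lcp_comm (sfx T n (SA i0)), lcp_comm (sfx T n (SA i'))]
      exact this
    exact le_trans h1 (le_trans hgfi0 h2)
  · intro i' hi'1 hi'2
    have hhi' : h < i' := by omega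
    have hnP : ¬ P i' := Nat.findGreatest_is_greatest
      (show Nat.findGreatest P (j - 1) < i' by rw [← hi0]; omega) (by omega)
    simp only [hP] at hnP
    push_neg at hnP
    exact le_of_lt (hnP hhi')
end

section
/- Let A be a finite nonempty set of strings over a linearly ordered alphabet and let W be any string. Then there exists V ∈ A maximizing lcp(W, ·) over A such that V is either the lexicographically largest element of {U ∈ A : U ≤ W} or the lexicographically smallest element of {U ∈ A : W < U}. That is, a maximizer of the longest-common-prefix length with W can always be found among the (at most two) elements of A lexicographically adjacent to W. -/
variable {α : Type*} [LinearOrder α]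

lemma cons_lt_cons_iff' {a b : α} {u v : List α} :
    a :: u < b :: v ↔ a < b ∨ (a = b ∧ u < v) := by
  constructor
  · intro h
    cases h with
    | cons h => exact Or.inr ⟨rfl, h⟩
    | rel h => exact Or.inl h
  · rintro (h | ⟨rfl, h⟩)
    · exact List.Lex.rel h
    · exact List.Lex.cons h

lemma cons_le_cons_iff' {a b : α} {u v : List α} :
    a :: u ≤ b :: v ↔ a < b ∨ (a = b ∧ u ≤ v) := by
  rw [le_iff_lt_or_eq, le_iff_lt_or_eq, cons_lt_cons_iff']
  constructor
  · rintro ((h | ⟨rfl, h⟩) | h)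
    · exact Or.inl h
    · exact Or.inr ⟨rfl, Or.inl h⟩
    · injection h with h1 h2; exact Or.inr ⟨h1, Or.inr h2⟩
  · rintro (h | ⟨rfl, h | rfl⟩)
    · exact Or.inl (Or.inl h)
    · exact Or.inl (Or.inr ⟨rfl, h⟩)
    · exact Or.inr rfl

lemma lcp_nil_right_s9 (W : List α) : lcp W ([] : List α) = 0 := by
  cases W <;> rfl

lemma lcp_mono_le {W U V : List α} (h1 : U ≤ V) (h2 : V ≤ W) :
    lcp W U ≤ lcp W V := by
  induction W generalizing U V with
  | nil =>
    cases U with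
    | nil => simp [lcp]
    | cons a u => simp [lcp]
  | cons c w ih =>
    cases U with
    | nil => simp [lcp_nil_right_s9]
    | cons a u =>
      cases V with
      | nil => exact absurd h1 (not_le.mpr (List.nil_lt_cons a u))
      | cons b v =>
        by_cases hca : c = a
        · subst hca
          rw [cons_le_cons_iff'] at h1 h2
          rcases h1 with h1 | ⟨rfl, h1⟩
          · rcases h2 with h2 | ⟨rfl, h2⟩
            · exact absurd (h1.trans h2) (lt_irrefl _)
            · exact absurd h1 (lt_irrefl _)
          · rcases h2 with h2 | ⟨_, h2⟩
            · exact absurd h2 (lt_irrefl _)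
            · simp only [lcp, if_pos rfl]
              exact Nat.succ_le_succ (ih h1 h2)
        · simp [lcp, hca]

lemma lcp_mono_ge {W U V : List α} (h1 : W ≤ V) (h2 : V ≤ U) :
    lcp W U ≤ lcp W V := by
  induction W generalizing U V with
  | nil =>
    cases U with
    | nil => simp [lcp]
    | cons a u => simp [lcp]
  | cons c w ih =>
    cases U with
    | nil => simp [lcp_nil_right_s9]
    | cons a u =>
      cases V with
      | nil => exact absurd h1 (not_le.mpr (List.nil_lt_cons c w))
      | cons b v =>
        by_cases hca : c = a
        · subst hca
          rw [cons_le_cons_iff'] at h1 h2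
          rcases h1 with h1 | ⟨rfl, h1⟩
          · rcases h2 with h2 | ⟨rfl, h2⟩
            · exact absurd (h1.trans h2) (lt_irrefl _)
            · exact absurd h1 (lt_irrefl _)
          · rcases h2 with h2 | ⟨_, h2⟩
            · exact absurd h2 (lt_irrefl _)
            · simp only [lcp, if_pos rfl]
              exact Nat.succ_le_succ (ih h1 h2)
        · simp [lcp, hca]

/-- For a finite nonempty set `A` of strings and any string `W`,
some `V ∈ A` maximizing the LCP length with `W` is either the lexicographically
largest element of `{U ∈ A : U ≤ W}` or the lexicographically smallest element of
`{U ∈ A : W < U}`. -/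
theorem statement9 (A : Finset (List α)) (hA : A.Nonempty) (W : List α) :
    ∃ V ∈ A, (∀ U ∈ A, lcp W U ≤ lcp W V) ∧
      ((V ≤ W ∧ ∀ U ∈ A, U ≤ W → U ≤ V) ∨ (W < V ∧ ∀ U ∈ A, W < U → V ≤ U)) := by
  classical
  set B := A.filter (· ≤ W) with hB
  set C := A.filter (W < ·) with hC
  have hmemB : ∀ U, U ∈ B ↔ U ∈ A ∧ U ≤ W := by
    intro U; simp [hB]
  have hmemC : ∀ U, U ∈ C ↔ U ∈ A ∧ W < U := by
    intro U; simp [hC]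
  -- bounds via the two candidates
  by_cases hBne : B.Nonempty
  · by_cases hCne : C.Nonempty
    · set V1 := B.max' hBne
      set V2 := C.min' hCne
      have hV1B := B.max'_mem hBne
      have hV2C := C.min'_mem hCne
      have hV1 := (hmemB V1).mp hV1B
      have hV2 := (hmemC V2).mp hV2C
      have bound1 : ∀ U ∈ A, U ≤ W → lcp W U ≤ lcp W V1 := fun U hU hUW =>
        lcp_mono_le (B.le_max' U ((hmemB U).mpr ⟨hU, hUW⟩)) hV1.2
      have bound2 : ∀ U ∈ A, W < U → lcp W U ≤ lcp W V2 := fun U hU hUW =>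
        lcp_mono_ge hV2.2.le (C.min'_le U ((hmemC U).mpr ⟨hU, hUW⟩))
      by_cases hcmp : lcp W V2 ≤ lcp W V1
      · refine ⟨V1, hV1.1, fun U hU => ?_, Or.inl ⟨hV1.2, fun U hU hUW =>
          B.le_max' U ((hmemB U).mpr ⟨hU, hUW⟩)⟩⟩
        rcases le_or_gt U W with h | h
        · exact bound1 U hU h
        · exact (bound2 U hU h).trans hcmp
      · refine ⟨V2, hV2.1, fun U hU => ?_, Or.inr ⟨hV2.2, fun U hU hUW =>
          C.min'_le U ((hmemC U).mpr ⟨hU, hUW⟩)⟩⟩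
        rcases le_or_gt U W with h | h
        · exact (bound1 U hU h).trans (le_of_not_ge hcmp)
        · exact bound2 U hU h
    · -- all of A is ≤ W
      set V1 := B.max' hBne
      have hV1B := B.max'_mem hBne
      have hV1 := (hmemB V1).mp hV1B
      refine ⟨V1, hV1.1, fun U hU => ?_, Or.inl ⟨hV1.2, fun U hU hUW =>
        B.le_max' U ((hmemB U).mpr ⟨hU, hUW⟩)⟩⟩
      rcases le_or_gt U W with h | h
      · exact lcp_mono_le (B.le_max' U ((hmemB U).mpr ⟨hU, h⟩)) hV1.2
      · exact absurd ⟨U, (hmemC U).mpr ⟨hU, h⟩⟩ hCne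
  · -- all of A is > W
    have hCne : C.Nonempty := by
      obtain ⟨U, hU⟩ := hA
      rcases le_or_gt U W with h | h
      · exact absurd ⟨U, (hmemB U).mpr ⟨hU, h⟩⟩ hBne
      · exact ⟨U, (hmemC U).mpr ⟨hU, h⟩⟩
    set V2 := C.min' hCne
    have hV2C := C.min'_mem hCne
    have hV2 := (hmemC V2).mp hV2C
    refine ⟨V2, hV2.1, fun U hU => ?_, Or.inr ⟨hV2.2, fun U hU hUW =>
      C.min'_le U ((hmemC U).mpr ⟨hU, hUW⟩)⟩⟩
    rcases le_or_gt U W with h | h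
    · exact absurd ⟨U, (hmemB U).mpr ⟨hU, h⟩⟩ hBne
    · exact lcp_mono_ge hV2.2.le (C.min'_le U ((hmemC U).mpr ⟨hU, h⟩))
end

section
/- Let P be a nonempty string. Then the number of positions p ∈ {1,...,n} with p + |P| − 1 ≤ n and T[p..p+|P|−1] = P (the number of occurrences of P in T) equals the cardinality of the SA-interval of P, and the set of occurrence positions equals {SA[i] : i is in the SA-interval of P}. -/
variable {α : Type*} [LinearOrder α]

lemma prefix_sfx_iff (T : ℕ → α) (n p : ℕ) (P : List α) (hP : P ≠ []) :
    P <+: sfx T n p ↔ (p + P.length - 1 ≤ n ∧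
      (List.range P.length).map (fun d => T (p + d)) = P) := by
  have hPlen : 1 ≤ P.length := List.length_pos_iff.mpr hP
  constructor
  · intro h
    have hlen := h.length_le
    simp only [sfx, List.length_map, List.length_range] at hlen
    refine ⟨by omega, ?_⟩
    have ht : P = (sfx T n p).take P.length := List.prefix_iff_eq_take.mp h
    have hkey : (sfx T n p).take P.length
        = (List.range P.length).map (fun d => T (p + d)) := by
      simp only [sfx, ← List.map_take, List.take_range, min_eq_left hlen]
    rw [← hkey]; exact ht.symm
  · rintro ⟨h1, h2⟩
    rw [← h2]
    refine List.IsPrefix.map _ ?_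
    have := List.take_prefix P.length (List.range (n + 1 - p))
    rwa [List.take_range, min_eq_left (by omega : P.length ≤ n + 1 - p)] at this

/-- For a nonempty pattern `P`, the number of occurrences of `P`
in `T` (positions `p ∈ {1,...,n}` with `p + |P| - 1 ≤ n` and `T[p..p+|P|-1] = P`)
equals the cardinality of the SA-interval of `P`, and the set of occurrence positions
is the image under `SA` of the SA-interval. -/
theorem statement14
    (n : ℕ) (T : ℕ → α) (dollar : α) (SA : ℕ → ℕ)
    -- `T[1..n]` is a string of length `n ≥ 1` ending with `$`,
    -- which is smaller than every other character and occurs only at position `n`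
    (hn : 1 ≤ n) (hTn : T n = dollar)
    (hdollar : ∀ p, 1 ≤ p → p < n → dollar < T p)
    -- `SA` is a permutation of `{1,...,n}` sorting the suffixes lexicographically
    (hSAran : ∀ i, 1 ≤ i → i ≤ n → 1 ≤ SA i ∧ SA i ≤ n)
    (hSAsurj : ∀ p, 1 ≤ p → p ≤ n → ∃ i, 1 ≤ i ∧ i ≤ n ∧ SA i = p)
    (hSAmono : ∀ i j, 1 ≤ i → i < j → j ≤ n → sfx T n (SA i) < sfx T n (SA j))
    (P : List α) (hP : P ≠ []) :
    ((Finset.Icc 1 n).filter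
        (fun p => p + P.length - 1 ≤ n ∧
          (List.range P.length).map (fun d => T (p + d)) = P)).card =
      ((Finset.Icc 1 n).filter (fun i => P <+: sfx T n (SA i))).card ∧
    ((Finset.Icc 1 n).filter (fun i => P <+: sfx T n (SA i))).image SA =
      (Finset.Icc 1 n).filter
        (fun p => p + P.length - 1 ≤ n ∧
          (List.range P.length).map (fun d => T (p + d)) = P) := by
  have himg : ((Finset.Icc 1 n).filter (fun i => P <+: sfx T n (SA i))).image SA =
      (Finset.Icc 1 n).filter
        (fun p => p + P.length - 1 ≤ n ∧
          (List.range P.length).map (fun d => T (p + d)) = P) := by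
    ext p
    simp only [Finset.mem_image, Finset.mem_filter, Finset.mem_Icc]
    constructor
    · rintro ⟨i, ⟨⟨hi1, hi2⟩, hpre⟩, rfl⟩
      obtain ⟨h1, h2⟩ := hSAran i hi1 hi2
      exact ⟨⟨h1, h2⟩, (prefix_sfx_iff T n (SA i) P hP).mp hpre⟩
    · rintro ⟨⟨hp1, hp2⟩, hc⟩
      obtain ⟨i, hi1, hi2, rfl⟩ := hSAsurj p hp1 hp2
      exact ⟨i, ⟨⟨hi1, hi2⟩, (prefix_sfx_iff T n (SA i) P hP).mpr hc⟩, rfl⟩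
  have hinj : Set.InjOn SA ((Finset.Icc 1 n).filter (fun i => P <+: sfx T n (SA i))) := by
    intro i hi j hj hij
    simp only [Finset.coe_filter, Finset.mem_Icc, Set.mem_setOf_eq] at hi hj
    by_contra hne
    rcases lt_or_gt_of_ne hne with h | h
    · exact absurd (hSAmono i j hi.1.1 h hj.1.2) (by rw [hij]; exact lt_irrefl _)
    · exact absurd (hSAmono j i hj.1.1 h hi.1.2) (by rw [hij]; exact lt_irrefl _)
  refine ⟨?_, himg⟩
  rw [← himg, Finset.card_image_of_injOn hinj]
end

section
/- Let S[1..m] and T[1..n] be strings and let 1 < i ≤ m. Then ℓ_{i−1} ≤ ℓ_i + 1, and ℓ_{i−1} = ℓ_i + 1 holds if and only if the substring S[i−1..i+ℓ_i−1] of S (of length ℓ_i + 1) occurs in T. Consequently, the substring S[i..i+ℓ_i−1] is left-maximal among substrings of S occurring in T exactly when ℓ_{i−1} ≠ ℓ_i + 1. -/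
variable {α : Type*} [LinearOrder α]

/-- For `1 < i ≤ m`: `ℓ_{i-1} ≤ ℓ_i + 1`, with equality iff the
substring `S[i-1..i+ℓ_i-1]` (of length `ℓ_i + 1`) occurs in `T`.  Consequently
`S[i..i+ℓ_i-1]` is left-maximal among substrings of `S` occurring in `T` exactly when
`ℓ_{i-1} ≠ ℓ_i + 1`. -/
theorem statement16
    (S T : List α) (ℓ : ℕ → ℕ)
    -- `ℓ i` is the matching-statistics length of `S[1..m]` at position `i` w.r.t. `T`:
    -- the largest `l ≥ 0` such that the substring `S[i..i+l-1]` of `S`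
    -- (i.e. `(S.drop (i-1)).take l`) occurs as a contiguous substring of `T`
    (hms : ∀ i, 1 ≤ i → i ≤ S.length →
      i + ℓ i - 1 ≤ S.length ∧ ((S.drop (i - 1)).take (ℓ i)) <:+: T ∧
        ∀ l, i + l - 1 ≤ S.length → ((S.drop (i - 1)).take l) <:+: T → l ≤ ℓ i)
    (i : ℕ) (hi1 : 1 < i) (hi2 : i ≤ S.length) :
    ℓ (i - 1) ≤ ℓ i + 1 ∧
    (ℓ (i - 1) = ℓ i + 1 ↔ ((S.drop (i - 2)).take (ℓ i + 1)) <:+: T) ∧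
    (¬ ((S.drop (i - 2)).take (ℓ i + 1)) <:+: T ↔ ℓ (i - 1) ≠ ℓ i + 1) := by
  obtain ⟨hA1, hA2, hA3⟩ := hms (i - 1) (by omega) (by omega)
  obtain ⟨hB1, hB2, hB3⟩ := hms i (by omega) hi2
  have h12 : i - 1 - 1 = i - 2 := by omega
  rw [h12] at hA2 hA3
  have key : ℓ (i - 1) ≤ ℓ i + 1 := by
    have hinf : (S.drop (i - 1)).take (ℓ (i - 1) - 1) <:+: T := by
      have heq : (S.drop (i - 1)).take (ℓ (i - 1) - 1) =
          ((S.drop (i - 2)).take (ℓ (i - 1))).drop 1 := by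
        rw [List.drop_take, List.drop_drop, show i - 2 + 1 = i - 1 from by omega]
      rw [heq]
      exact (List.drop_suffix 1 _).isInfix.trans hA2
    have := hB3 (ℓ (i - 1) - 1) (by omega) hinf
    omega
  refine ⟨key, ?_, ?_⟩
  · constructor
    · intro h
      rw [h] at hA2
      exact hA2
    · intro h
      have := hA3 (ℓ i + 1) (by omega) h
      omega
  · constructor
    · intro h heq
      rw [← heq] at h
      exact h hA2
    · intro h hocc
      have := hA3 (ℓ i + 1) (by omega) hocc
      omega
end

section
/- Let S[1..m] and T[1..n] be strings such that every character occurring in S also occurs in T, and let 1 ≤ a < b ≤ m. Then the substring S[a..b] is a minimal non-matching substring — i.e., S[a..b] does not occur in T but every proper substring of S[a..b] occurs in T — if and only if ℓ_a = b − a and ℓ_{a+1} ≥ b − a. -/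
variable {α : Type*} [LinearOrder α]

private lemma takeA {α : Type*} {x y : List α} {k K : ℕ} (h : k ≤ K)
    (hx : x.take K <:+: y) : x.take k <:+: y := by
  have he : x.take k = (x.take K).take k := by
    rw [List.take_take, min_eq_left h]
  rw [he]
  exact (List.take_prefix k (x.take K)).isInfix.trans hx

private lemma takeB {α : Type*} (x : List α) {d k K : ℕ} (h : d + k ≤ K) :
    (x.drop d).take k <:+: x.take K := by
  have h1 : (x.take K).drop d = (x.drop d).take (K - d) := by
    rw [List.drop_take]
  have he : (x.drop d).take k = ((x.take K).drop d).take k := by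
    rw [h1, List.take_take, min_eq_left (by omega)]
  rw [he]
  exact (List.take_prefix k ((x.take K).drop d)).isInfix.trans
    (List.drop_suffix d (x.take K)).isInfix

/-- If every character of `S` occurs in `T`, then for
`1 ≤ a < b ≤ m`, the substring `S[a..b]` is a minimal non-matching substring (it does
not occur in `T` but every proper substring of it does) if and only if
`ℓ_a = b - a` and `ℓ_{a+1} ≥ b - a`. -/
theorem statement17
    (S T : List α) (ℓ : ℕ → ℕ)
    -- `ℓ i` is the matching-statistics length of `S[1..m]` at position `i` w.r.t. `T`:
    -- the largest `l ≥ 0` such that the substring `S[i..i+l-1]` of `S`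
    -- (i.e. `(S.drop (i-1)).take l`) occurs as a contiguous substring of `T`
    (hms : ∀ i, 1 ≤ i → i ≤ S.length →
      i + ℓ i - 1 ≤ S.length ∧ ((S.drop (i - 1)).take (ℓ i)) <:+: T ∧
        ∀ l, i + l - 1 ≤ S.length → ((S.drop (i - 1)).take l) <:+: T → l ≤ ℓ i)
    (hchar : ∀ x ∈ S, x ∈ T)
    (a b : ℕ) (ha : 1 ≤ a) (hab : a < b) (hb : b ≤ S.length) :
    (¬ ((S.drop (a - 1)).take (b - a + 1)) <:+: T ∧
      ∀ a' b', a ≤ a' → a' ≤ b' → b' ≤ b → (a', b') ≠ (a, b) →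
        ((S.drop (a' - 1)).take (b' - a' + 1)) <:+: T)
    ↔ (ℓ a = b - a ∧ b - a ≤ ℓ (a + 1)) := by
  have ham : a ≤ S.length := by omega
  obtain ⟨hA1, hA2, hA3⟩ := hms a ha ham
  obtain ⟨hB1, hB2, hB3⟩ := hms (a + 1) (by omega) (by omega)
  have hda : a + 1 - 1 = a := by omega
  rw [hda] at hB2 hB3
  constructor
  · rintro ⟨hno, hall⟩
    have h1 : (S.drop (a - 1)).take (b - a) <:+: T := by
      have := hall a (b - 1) le_rfl (by omega) (by omega) (by
        simp only [ne_eq, Prod.mk.injEq, not_and]; omega)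
      rwa [show b - 1 - a + 1 = b - a by omega] at this
    have le1 : b - a ≤ ℓ a := hA3 (b - a) (by omega) h1
    have le2 : ¬ (b - a + 1 ≤ ℓ a) := fun h => hno (takeA h hA2)
    have h2 : (S.drop a).take (b - a) <:+: T := by
      have := hall (a + 1) b (by omega) (by omega) le_rfl (by
        simp only [ne_eq, Prod.mk.injEq, not_and]; omega)
      rwa [show b - (a + 1) + 1 = b - a by omega, hda] at this
    exact ⟨by omega, hB3 (b - a) (by omega) h2⟩
  · rintro ⟨heq, hge⟩
    constructor
    · intro h
      have := hA3 (b - a + 1) (by omega) h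
      omega
    · intro a' b' h1 h2 h3 h4
      rcases eq_or_lt_of_le h1 with rfl | hlt
      · have hb' : b' < b := by
          rcases lt_or_eq_of_le h3 with h | h
          · exact h
          · exact absurd (by rw [h]) h4
        exact takeA (k := b' - a + 1) (K := ℓ a) (by omega) hA2
      · have hdd : (S.drop a).drop (a' - 1 - a) = S.drop (a' - 1) := by
          rw [List.drop_drop]
          congr 1
          omega
        have hin : (S.drop (a' - 1)).take (b' - a' + 1) <:+: (S.drop a).take (b - a) := by
          rw [← hdd]
          exact takeB (S.drop a) (by omega)
        exact hin.trans (takeA hge hB2)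
end
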